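/- Let (R,B) be a ℤ-based rng. Then the ℂ-algebra R_ℂ := ℂ ⊗_ℤ R is a semisimple ring. -/

import Mathlib

open scoped BigOperators

/-- Let `(R,B)` be a `ℤ`-based rng. Then `R_ℂ = ℂ ⊗_ℤ R` is a
semisimple ring. Here the complexification `R_ℂ` is modelled as a commutative
`ℂ`-algebra `A` with a basis `b` indexed by `Fin n` whose structure constants
are the integers `N i j m`; `1 = e = ∑ e_i • b i` with `e_i = b.repr 1 i`,
`σ` is the involution `~` on the basis, and the hypotheses are exactly the
axioms of a `ℤ`-based rng. -/
theorem zBasedRng_complexification_isSemisimpleRing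
    {n : ℕ} (A : Type*) [CommRing A] [Algebra ℂ A]
    (b : Module.Basis (Fin n) ℂ A) (N : Fin n → Fin n → Fin n → ℤ) (σ : Fin n → Fin n)
    (hmul : ∀ i j, b i * b j = ∑ m, (N i j m : ℂ) • b m)
    (hσ : ∀ i, σ (σ i) = i)
    (hσN : ∀ i j m, N (σ i) (σ j) m = N i j (σ m))
    (hτ : ∀ i j, (∑ m, (starRingEnd ℂ) (b.repr 1 m) * (N (σ i) j m : ℂ)) =
      if i = j then (1 : ℂ) else 0)
    (he : ∀ j, (starRingEnd ℂ) (b.repr 1 (σ j)) = b.repr 1 j) :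
    IsSemisimpleRing A := by
  classical
  haveI : Module.Finite ℂ A := Module.Finite.of_basis b
  haveI : IsArtinianRing A := IsArtinianRing.of_finite ℂ A
  set c : ℂ →+* ℂ := starRingEnd ℂ with hc
  -- the permutation induced by σ
  have hσinv : Function.Involutive σ := hσ
  set eσ : Equiv.Perm (Fin n) := hσinv.toPerm with heσ
  -- coordinates of a product
  have hrepr : ∀ x y : A, ∀ m, b.repr (x * y) m =
      ∑ i, ∑ j, b.repr x i * b.repr y j * (N i j m : ℂ) := by
    intro x y m
    have hxy : x * y = ∑ i, ∑ j, (b.repr x i * b.repr y j) • (b i * b j) := by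
      conv_lhs => rw [← b.sum_repr x, ← b.sum_repr y]
      rw [Finset.sum_mul_sum]
      exact Finset.sum_congr rfl fun i _ => Finset.sum_congr rfl fun j _ =>
        (smul_mul_smul_comm _ _ _ _)
    rw [hxy]
    simp only [hmul, Finset.smul_sum, smul_smul, map_sum, map_smul, Module.Basis.repr_self,
      Finsupp.smul_apply, Finsupp.coe_finset_sum, Finset.sum_apply, Finsupp.single_apply,
      smul_eq_mul, mul_ite, mul_one, mul_zero, Finset.sum_ite_eq', Finset.mem_univ, if_true]
  -- the antilinear involution and the trace functional
  set st : A → A := fun x => ∑ i, c (b.repr x (σ i)) • b i with hst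
  set tau : A → ℂ := fun x => ∑ m, c (b.repr 1 m) * b.repr x m with htau
  have hstrepr : ∀ (x : A) (j : Fin n), b.repr (st x) j = c (b.repr x (σ j)) := by
    intro x j
    rw [hst]
    exact congrFun (b.repr_sum_self fun i => c (b.repr x (σ i))) j
  have hstst : ∀ x : A, st (st x) = x := by
    intro x
    apply b.repr.injective
    ext j
    rw [hstrepr, hstrepr, hσ, hc, Complex.conj_conj]
  have hstmul : ∀ x y : A, st (x * y) = st x * st y := by
    intro x y
    apply b.repr.injective
    ext m
    rw [hstrepr, hrepr, hrepr]
    rw [map_sum]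
    rw [← Equiv.sum_comp eσ (fun i => ∑ j, b.repr (st x) i * b.repr (st y) j * (N i j m : ℂ))]
    apply Finset.sum_congr rfl
    intro i _
    rw [map_sum]
    rw [← Equiv.sum_comp eσ (fun j => b.repr (st x) (eσ i) * b.repr (st y) j * (N (eσ i) j m : ℂ))]
    apply Finset.sum_congr rfl
    intro j _
    have hee : (eσ : Fin n → Fin n) = σ := rfl
    rw [hee, hstrepr, hstrepr, hσ, hσ, hσN, map_mul, map_mul, map_intCast]
  have hinner : ∀ x y : A, tau (st x * y) = ∑ i, c (b.repr x i) * b.repr y i := by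
    intro x y
    rw [htau]
    simp only [hrepr, hstrepr, Finset.mul_sum]
    rw [Finset.sum_comm]
    rw [← Equiv.sum_comp eσ (fun i => ∑ m, ∑ j,
      c (b.repr 1 m) * (c (b.repr x (σ i)) * b.repr y j * (N i j m : ℂ)))]
    apply Finset.sum_congr rfl
    intro i _
    have hee : (eσ : Fin n → Fin n) = σ := rfl
    rw [hee]
    rw [Finset.sum_comm]
    have key : ∀ j, (∑ m, c (b.repr 1 m) * (c (b.repr x (σ (σ i))) * b.repr y j * (N (σ i) j m : ℂ)))
        = c (b.repr x i) * b.repr y j * (if i = j then (1:ℂ) else 0) := by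
      intro j
      rw [← hτ i j, Finset.mul_sum]
      apply Finset.sum_congr rfl
      intro m _
      rw [hσ]
      ring
    simp only [key, mul_ite, mul_one, mul_zero, Finset.sum_ite_eq, Finset.mem_univ, if_true]
  have hpos : ∀ x : A, (∑ i, c (b.repr x i) * b.repr x i) = 0 → x = 0 := by
    intro x hx
    have h1 : (∑ i, (Complex.normSq (b.repr x i) : ℂ)) = 0 := by
      rw [← hx]
      apply Finset.sum_congr rfl
      intro i _
      rw [hc, ← Complex.normSq_eq_conj_mul_self]
    have h2 : (∑ i, Complex.normSq (b.repr x i)) = 0 := by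
      exact_mod_cast h1
    have h3 : ∀ i : Fin n, Complex.normSq (b.repr x i) = 0 := by
      intro i
      have := (Finset.sum_eq_zero_iff_of_nonneg
        (fun i _ => Complex.normSq_nonneg (b.repr x i))).mp h2
      exact this i (Finset.mem_univ i)
    apply b.repr.injective
    ext i
    simpa using Complex.normSq_eq_zero.mp (h3 i)
  have htau0 : tau 0 = 0 := by
    rw [htau]; simp
  -- A is reduced
  have hsq : ∀ a : A, a * a = 0 → a = 0 := by
    intro a ha
    set d : A := st a * a with hd
    have hd2 : d * d = 0 := by
      have : d * d = (st a * st a) * (a * a) := by rw [hd]; ring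
      rw [this, ha, mul_zero]
    have hstd : st d = d := by
      rw [hd, hstmul, hstst, mul_comm]
    have hdz : d = 0 := by
      apply hpos
      have := hinner d d
      rw [hstd, hd2, htau0] at this
      exact this.symm
    apply hpos
    have := hinner a a
    rw [← hd, hdz, htau0] at this
    exact this.symm
  haveI : IsReduced A := by
    have key : ∀ k : ℕ, ∀ x : A, x ^ k = 0 → x = 0 := by
      intro k
      induction k using Nat.strong_induction_on with
      | _ k ih =>
        intro x hx
        match k, hx with
        | 0, hx =>
          have h1 : (1 : A) = 0 := by simpa using hx
          calc x = x * 1 := (mul_one x).symm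
          _ = 0 := by rw [h1, mul_zero]
        | 1, hx => simpa using hx
        | (k+2), hx =>
          have hy : x ^ ((k + 3) / 2) * x ^ ((k + 3) / 2) = 0 := by
            rw [← pow_add]
            have h2 : (k + 3) / 2 + (k + 3) / 2 = (k + 2) + ((k+3)/2 + (k+3)/2 - (k+2)) := by
              omega
            rw [h2, pow_add, hx, zero_mul]
          exact ih ((k + 3) / 2) (by omega) x (hsq _ hy)
    constructor
    rintro x ⟨k, hk⟩
    exact key k x hk
  exact IsArtinianRing.isSemisimpleRing_of_isReduced A
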